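/- Optimal baseline normal equations: Fix coordinate i and consider the estimator g(b) = ∑_{t=1}^T (R(s̄) − b_t)·D_t where D_t := ∂_{θ_i} log π_θ(a_t | s_t) and b ∈ ℝ^T is a vector of constant baselines. Then E[g(b)] does not depend on b, and the vector b* minimizing E[g(b)²] satisfies the linear system X b* = y, where X_{τ,t} = E[D_t D_τ] and y_τ = E[R(s̄) · (∑_{t=1}^T D_t) · D_τ]. In particular if X is invertible, b* = X^{-1} y is the unique minimizer. -/

import Mathlib

/-- Decompose a sum over functions `Fin T → S × A` into a sum over the values
away from a distinguished slot and the value at that slot. -/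
lemma opt_baseline_sum_slot {T : ℕ} {S A : Type*} [Fintype S] [Fintype A] (slot : Fin T)
    (x₀ : S × A) (F : (Fin T → S × A) → ℝ) :
    ∑ τ : Fin T → S × A, F τ
      = ∑ σ : {u : Fin T // u ≠ slot} → S × A, ∑ x : S × A,
          F (Function.update ((Equiv.piSplitAt slot fun _ => S × A).symm (x₀, σ)) slot x) := by
  rw [← (Equiv.piSplitAt slot fun _ : Fin T => S × A).symm.sum_comp F]
  rw [Fintype.sum_prod_type, Finset.sum_comm]
  refine Finset.sum_congr rfl fun σ _ => Finset.sum_congr rfl fun x _ => ?_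
  congr 1
  funext u
  rcases eq_or_ne u slot with h | h
  · subst h
    simp [Equiv.piSplitAt_symm_apply]
  · simp [Equiv.piSplitAt_symm_apply, h, Function.update_of_ne h]

/-- Marginalization: the expectation of a per-slot score function vanishes. -/
lemma opt_baseline_marg {T : ℕ} {S A : Type*} [Fintype S] [Fintype A] [DecidableEq S]
    [DecidableEq A]
    (p : Fin T → (Fin T → S × A) → ℝ)
    (hpdep : ∀ (t : Fin T) (τ τ' : Fin T → S × A),
      (∀ u, u < t → τ u = τ' u) → (τ t).1 = (τ' t).1 → p t τ = p t τ')
    (hpsum : ∀ (t : Fin T) (τ : Fin T → S × A),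
      ∑ s : S, p t (Function.update τ t (s, (τ t).2)) = 1)
    (q : S → A → ℝ) (hqsum : ∀ s, ∑ a, q s a = 1)
    (Dq : S → A → ℝ) (hDq : ∀ s, ∑ a, q s a * Dq s a = 0)
    (t : Fin T) :
    ∑ τ : Fin T → S × A, (∏ u, p u τ * q (τ u).1 (τ u).2) * Dq (τ t).1 (τ t).2 = 0 := by
  rcases isEmpty_or_nonempty (S × A) with hE | hNE
  · haveI : IsEmpty (Fin T → S × A) := ⟨fun f => IsEmpty.false (f t)⟩
    simp
  inhabit (S × A)
  set x₀ : S × A := default with hx₀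
  set w : Fin T → (Fin T → S × A) → ℝ :=
    fun u τ => p u τ * q (τ u).1 (τ u).2 with hw
  have hwinv : ∀ (u slot : Fin T), u.val < slot.val → ∀ (τ₀ : Fin T → S × A) (x : S × A),
      w u (Function.update τ₀ slot x) = w u τ₀ := by
    intro u slot hus τ₀ x
    have hne : u ≠ slot := fun h => by simp [h] at hus
    have hq : Function.update τ₀ slot x u = τ₀ u := Function.update_of_ne hne _ _
    have hp : p u (Function.update τ₀ slot x) = p u τ₀ := by
      apply hpdep
      · intro u' hu'
        exact Function.update_of_ne (fun h => by subst h; exact absurd (lt_trans hu' (by exact Fin.lt_def.mpr hus)) (lt_irrefl _)) _ _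
      · rw [hq]
    simp only [hw, hp, hq]
  have key : ∀ m : ℕ, t.val < m → m ≤ T →
      ∑ τ : Fin T → S × A,
        (∏ u ∈ Finset.univ.filter (fun u : Fin T => u.val < m), w u τ)
          * Dq (τ t).1 (τ t).2 = 0 := by
    intro m
    induction m with
    | zero => intro h; omega
    | succ m ih =>
      intro htm hmT
      have hmT' : m < T := by omega
      rcases Nat.lt_or_ge t.val m with hm | hm
      · -- step case: marginalize out slot m
        set slot : Fin T := ⟨m, hmT'⟩ with hslot
        have hins : Finset.univ.filter (fun u : Fin T => u.val < m + 1)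
            = insert slot (Finset.univ.filter fun u : Fin T => u.val < m) := by
          ext u
          simp only [Finset.mem_filter, Finset.mem_univ, true_and, Finset.mem_insert, Fin.ext_iff, hslot, Fin.val_mk]
          omega
        have hnotmem : slot ∉ Finset.univ.filter fun u : Fin T => u.val < m := by simp [hslot]
        set G : (Fin T → S × A) → ℝ := fun τ =>
          (∏ u ∈ Finset.univ.filter (fun u : Fin T => u.val < m), w u τ) * Dq (τ t).1 (τ t).2 with hG
        have hGinv : ∀ (τ₀ : Fin T → S × A) (x : S × A),
            G (Function.update τ₀ slot x) = G τ₀ := by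
          intro τ₀ x
          have htne : t ≠ slot := by
            intro h
            have := congrArg Fin.val h
            simp only [hslot] at this
            omega
          simp only [hG, Function.update_of_ne htne]
          congr 1
          refine Finset.prod_congr rfl fun u hu => ?_
          simp only [Finset.mem_filter] at hu
          exact hwinv u slot hu.2 τ₀ x
        have hih := ih (by omega) (by omega)
        rw [opt_baseline_sum_slot slot x₀] at hih ⊢
        have hcard : (0:ℝ) < (Fintype.card (S × A) : ℝ) := by
          exact_mod_cast Fintype.card_pos
        have hih2 : ∑ σ : {u : Fin T // u ≠ slot} → S × A,
            G ((Equiv.piSplitAt slot fun _ => S × A).symm (x₀, σ)) = 0 := by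
          have : ∀ σ : {u : Fin T // u ≠ slot} → S × A,
              (∑ x : S × A, G (Function.update ((Equiv.piSplitAt slot fun _ => S × A).symm (x₀, σ)) slot x))
              = (Fintype.card (S × A) : ℝ) * G ((Equiv.piSplitAt slot fun _ => S × A).symm (x₀, σ)) := by
            intro σ
            rw [Finset.sum_congr rfl fun x _ => hGinv _ x]
            rw [Finset.sum_const, Finset.card_univ, nsmul_eq_mul]
          rw [Finset.sum_congr rfl fun σ _ => this σ, ← Finset.mul_sum] at hih
          rcases mul_eq_zero.mp hih with h | h
          · exact absurd h (ne_of_gt hcard)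
          · exact h
        refine Eq.trans (Finset.sum_congr rfl fun σ _ => ?_) hih2
        set τ₀ := (Equiv.piSplitAt slot fun _ => S × A).symm (x₀, σ) with hτ₀
        have hform : ∀ x : S × A,
            (∏ u ∈ Finset.univ.filter (fun u : Fin T => u.val < m + 1), w u (Function.update τ₀ slot x))
              * Dq ((Function.update τ₀ slot x) t).1 ((Function.update τ₀ slot x) t).2
            = w slot (Function.update τ₀ slot x) * G τ₀ := by
          intro x
          rw [hins, Finset.prod_insert hnotmem]
          rw [mul_assoc]
          congr 1
          exact hGinv τ₀ x
        rw [Finset.sum_congr rfl fun x _ => hform x, ← Finset.sum_mul]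
        have hsum1 : ∑ x : S × A, w slot (Function.update τ₀ slot x) = 1 := by
          rw [Fintype.sum_prod_type]
          have hrow : ∀ (s : S) (a : A),
              w slot (Function.update τ₀ slot (s, a))
                = p slot (Function.update τ₀ slot (s, (τ₀ slot).2)) * q s a := by
            intro s a
            simp only [hw, Function.update_self]
            congr 1
            apply hpdep
            · intro u' hu'
              have : u' ≠ slot := ne_of_lt hu'
              rw [Function.update_of_ne this, Function.update_of_ne this]
            · simp [Function.update_self]
          calc ∑ s : S, ∑ a : A, w slot (Function.update τ₀ slot (s, a))
              = ∑ s : S, p slot (Function.update τ₀ slot (s, (τ₀ slot).2)) := by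
                refine Finset.sum_congr rfl fun s _ => ?_
                rw [Finset.sum_congr rfl fun a _ => hrow s a, ← Finset.mul_sum, hqsum, mul_one]
            _ = 1 := hpsum slot τ₀
        rw [hsum1, one_mul]
      · -- base case: m = t.val, marginalize out slot t
        have hmt : m = t.val := by omega
        subst hmt
        have hins : Finset.univ.filter (fun u : Fin T => u.val < t.val + 1)
            = insert t (Finset.univ.filter fun u : Fin T => u.val < t.val) := by
          ext u
          simp only [Finset.mem_filter, Finset.mem_univ, true_and, Finset.mem_insert, Fin.ext_iff]
          omega
        have hnotmem : t ∉ Finset.univ.filter fun u : Fin T => u.val < t.val := by simp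
        rw [opt_baseline_sum_slot t x₀]
        apply Finset.sum_eq_zero
        intro σ _
        set τ₀ := (Equiv.piSplitAt t fun _ => S × A).symm (x₀, σ) with hτ₀
        set Gp : ℝ := ∏ u ∈ Finset.univ.filter (fun u : Fin T => u.val < t.val), w u τ₀ with hGp
        have hform : ∀ x : S × A,
            (∏ u ∈ Finset.univ.filter (fun u : Fin T => u.val < t.val + 1), w u (Function.update τ₀ t x))
              * Dq ((Function.update τ₀ t x) t).1 ((Function.update τ₀ t x) t).2
            = (p t (Function.update τ₀ t (x.1, (τ₀ t).2)) * Gp) * (q x.1 x.2 * Dq x.1 x.2) := by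
          intro x
          rw [hins, Finset.prod_insert hnotmem]
          have h1 : ∏ u ∈ Finset.univ.filter (fun u : Fin T => u.val < t.val), w u (Function.update τ₀ t x)
              = Gp := by
            refine Finset.prod_congr rfl fun u hu => ?_
            simp only [Finset.mem_filter] at hu
            exact hwinv u t hu.2 τ₀ x
          have h2 : w t (Function.update τ₀ t x)
              = p t (Function.update τ₀ t (x.1, (τ₀ t).2)) * q x.1 x.2 := by
            simp only [hw, Function.update_self]
            congr 1
            apply hpdep
            · intro u' hu'
              have : u' ≠ t := ne_of_lt hu'
              rw [Function.update_of_ne this, Function.update_of_ne this]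
            · simp [Function.update_self]
          rw [h1, h2, Function.update_self]
          ring
        rw [Finset.sum_congr rfl fun x _ => hform x, Fintype.sum_prod_type]
        apply Finset.sum_eq_zero
        intro s _
        simp only
        rw [← Finset.mul_sum, hDq, mul_zero]
  have huniv : Finset.univ.filter (fun u : Fin T => u.val < T) = (Finset.univ : Finset (Fin T)) := by
    ext u; simp [u.isLt]
  have hfin := key T t.isLt le_rfl
  rw [huniv] at hfin
  simpa only [hw] using hfin

/-- Optimal baseline normal equations.  With
`D t τ = ∂_{θ_i} log π_θ(a_t|s_t)` and the estimator
`g(b)(τ) = ∑_t (R(τ) − b_t)·D_t(τ)` for a vector `b ∈ ℝ^T` of constant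
baselines: the mean `E[g(b)]` does not depend on `b`; a vector `bopt` minimizes
`E[g(b)²]` iff it solves the normal equations `X bopt = y`, where
`X_{τ',t} = E[D_t D_{τ'}]` and `y_{τ'} = E[R·(∑_t D_t)·D_{τ'}]`; and if `X` is
invertible then `X⁻¹ y` is the unique minimizer. -/
theorem optimal_baseline_normal_equations
    (d T : ℕ) (S A : Type*) [Fintype S] [Fintype A] [DecidableEq S] [DecidableEq A]
    (p : Fin T → (Fin T → S × A) → ℝ)
    (π : EuclideanSpace ℝ (Fin d) → S → A → ℝ)
    (R : (Fin T → S × A) → ℝ)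
    (hppos : ∀ t τ, 0 < p t τ)
    (hpdep : ∀ (t : Fin T) (τ τ' : Fin T → S × A),
      (∀ u, u < t → τ u = τ' u) → (τ t).1 = (τ' t).1 → p t τ = p t τ')
    (hpsum : ∀ (t : Fin T) (τ : Fin T → S × A),
      ∑ s : S, p t (Function.update τ t (s, (τ t).2)) = 1)
    (hπpos : ∀ θ s a, 0 < π θ s a)
    (hπsum : ∀ θ s, ∑ a, π θ s a = 1)
    (hπdiff : ∀ s a, Differentiable ℝ fun θ => π θ s a)
    (P : EuclideanSpace ℝ (Fin d) → (Fin T → S × A) → ℝ)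
    (hP : ∀ θ τ, P θ τ = ∏ t, p t τ * π θ (τ t).1 (τ t).2)
    (θ : EuclideanSpace ℝ (Fin d)) (i : Fin d)
    (D : Fin T → (Fin T → S × A) → ℝ)
    (hD : ∀ t τ, D t τ = fderiv ℝ (fun θ' => Real.log (π θ' (τ t).1 (τ t).2)) θ
      (EuclideanSpace.single i 1))
    (g : (Fin T → ℝ) → (Fin T → S × A) → ℝ)
    (hg : ∀ b τ, g b τ = ∑ t, (R τ - b t) * D t τ)
    (Xmat : Matrix (Fin T) (Fin T) ℝ)
    (hX : ∀ τ' t, Xmat τ' t = ∑ τ : Fin T → S × A, P θ τ * (D t τ * D τ' τ))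
    (y : Fin T → ℝ)
    (hy : ∀ τ', y τ' = ∑ τ : Fin T → S × A,
      P θ τ * (R τ * (∑ t, D t τ) * D τ' τ)) :
    (∀ b c : Fin T → ℝ,
      ∑ τ : Fin T → S × A, P θ τ * g b τ = ∑ τ : Fin T → S × A, P θ τ * g c τ) ∧
    (∀ bopt : Fin T → ℝ,
      (∀ b : Fin T → ℝ,
        ∑ τ : Fin T → S × A, P θ τ * (g bopt τ) ^ 2
          ≤ ∑ τ : Fin T → S × A, P θ τ * (g b τ) ^ 2)
        ↔ Xmat.mulVec bopt = y) ∧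
    (IsUnit Xmat → ∀ bopt : Fin T → ℝ,
      (∀ b : Fin T → ℝ,
        ∑ τ : Fin T → S × A, P θ τ * (g bopt τ) ^ 2
          ≤ ∑ τ : Fin T → S × A, P θ τ * (g b τ) ^ 2)
        ↔ bopt = Xmat⁻¹.mulVec y) := by
  have Ppos : ∀ τ, 0 < P θ τ := by
    intro τ
    rw [hP]
    exact Finset.prod_pos fun u _ => mul_pos (hppos u τ) (hπpos θ _ _)
  -- the per-pair score function
  set Dq : S → A → ℝ := fun s a =>
    fderiv ℝ (fun θ' => Real.log (π θ' s a)) θ (EuclideanSpace.single i 1) with hDqdef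
  have hDeq : ∀ t τ, D t τ = Dq (τ t).1 (τ t).2 := fun t τ => hD t τ
  have hqD : ∀ s a, π θ s a * Dq s a
      = fderiv ℝ (fun θ' => π θ' s a) θ (EuclideanSpace.single i 1) := by
    intro s a
    have hd := (hπdiff s a θ).hasFDerivAt
    have hne : π θ s a ≠ 0 := ne_of_gt (hπpos θ s a)
    have hlog := hd.log hne
    rw [hDqdef]
    simp only
    rw [hlog.fderiv, ContinuousLinearMap.smul_apply, smul_eq_mul, ← mul_assoc,
      mul_inv_cancel₀ hne, one_mul, hd.fderiv]
  have hDq0 : ∀ s, ∑ a, π θ s a * Dq s a = 0 := by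
    intro s
    have hsum : HasFDerivAt (fun θ' => ∑ a, π θ' s a)
        (∑ a ∈ Finset.univ, fderiv ℝ (fun θ' => π θ' s a) θ) θ :=
      HasFDerivAt.fun_sum fun a _ => (hπdiff s a θ).hasFDerivAt
    have hconst : (fun θ' : EuclideanSpace ℝ (Fin d) => ∑ a, π θ' s a) = fun _ => (1:ℝ) :=
      funext fun θ' => hπsum θ' s
    rw [hconst] at hsum
    have h0 : (∑ a ∈ Finset.univ, fderiv ℝ (fun θ' => π θ' s a) θ) = 0 :=
      hsum.unique (hasFDerivAt_const (1:ℝ) θ)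
    calc ∑ a, π θ s a * Dq s a
        = ∑ a, fderiv ℝ (fun θ' => π θ' s a) θ (EuclideanSpace.single i 1) :=
          Finset.sum_congr rfl fun a _ => hqD s a
      _ = (∑ a ∈ Finset.univ, fderiv ℝ (fun θ' => π θ' s a) θ) (EuclideanSpace.single i 1) := by
          rw [ContinuousLinearMap.sum_apply]
      _ = 0 := by rw [h0]; rfl
  -- the score has zero mean
  have hD0 : ∀ t, ∑ τ : Fin T → S × A, P θ τ * D t τ = 0 := by
    intro t
    have hm := opt_baseline_marg p hpdep hpsum (π θ) (fun s => hπsum θ s) Dq hDq0 t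
    calc ∑ τ : Fin T → S × A, P θ τ * D t τ
        = ∑ τ : Fin T → S × A,
            (∏ u, p u τ * π θ (τ u).1 (τ u).2) * Dq (τ t).1 (τ t).2 := by
          refine Finset.sum_congr rfl fun τ _ => ?_
          rw [hP, hDeq]
      _ = 0 := hm
  -- Part 1: the mean does not depend on b
  have part1 : ∀ b, ∑ τ : Fin T → S × A, P θ τ * g b τ
      = ∑ τ : Fin T → S × A, P θ τ * (R τ * ∑ u, D u τ) := by
    intro b
    have hpt : ∀ τ, P θ τ * g b τ
        = P θ τ * (R τ * ∑ u, D u τ) - ∑ u, b u * (P θ τ * D u τ) := by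
      intro τ
      rw [hg]
      have h1 : P θ τ * ∑ u, (R τ - b u) * D u τ
          = ∑ u, (P θ τ * (R τ * D u τ) - b u * (P θ τ * D u τ)) := by
        rw [Finset.mul_sum]
        exact Finset.sum_congr rfl fun u _ => by ring
      have h2 : P θ τ * (R τ * ∑ u, D u τ) = ∑ u, P θ τ * (R τ * D u τ) := by
        rw [Finset.mul_sum, Finset.mul_sum]
      rw [h1, h2, Finset.sum_sub_distrib]
    rw [Finset.sum_congr rfl fun τ _ => hpt τ, Finset.sum_sub_distrib]
    have h3 : ∑ τ : Fin T → S × A, ∑ u, b u * (P θ τ * D u τ) = 0 := by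
      rw [Finset.sum_comm]
      exact Finset.sum_eq_zero fun u _ => by rw [← Finset.mul_sum, hD0, mul_zero]
    rw [h3, sub_zero]
  -- cross term
  have cross : ∀ (c : Fin T → ℝ) (τ' : Fin T),
      ∑ τ : Fin T → S × A, P θ τ * (g c τ * D τ' τ) = y τ' - Xmat.mulVec c τ' := by
    intro c τ'
    have hpt : ∀ τ, P θ τ * (g c τ * D τ' τ)
        = P θ τ * (R τ * (∑ u, D u τ) * D τ' τ) - ∑ u, c u * (P θ τ * (D u τ * D τ' τ)) := by
      intro τ
      rw [hg]
      have h1 : P θ τ * ((∑ u, (R τ - c u) * D u τ) * D τ' τ)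
          = ∑ u, (P θ τ * (R τ * (D u τ * D τ' τ)) - c u * (P θ τ * (D u τ * D τ' τ))) := by
        rw [Finset.sum_mul, Finset.mul_sum]
        exact Finset.sum_congr rfl fun u _ => by ring
      have h2 : P θ τ * (R τ * (∑ u, D u τ) * D τ' τ)
          = ∑ u, P θ τ * (R τ * (D u τ * D τ' τ)) := by
        rw [Finset.mul_sum, Finset.sum_mul, Finset.mul_sum]
        exact Finset.sum_congr rfl fun u _ => by ring
      rw [h1, h2, Finset.sum_sub_distrib]
    rw [Finset.sum_congr rfl fun τ _ => hpt τ, Finset.sum_sub_distrib, ← hy]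
    congr 1
    rw [Finset.sum_comm, Matrix.mulVec, dotProduct]
    refine Finset.sum_congr rfl fun u _ => ?_
    rw [← Finset.mul_sum, ← hX]
    ring
  -- quadratic expansion
  have expand : ∀ b c : Fin T → ℝ,
      ∑ τ : Fin T → S × A, P θ τ * (g b τ) ^ 2
        = ∑ τ : Fin T → S × A, P θ τ * (g c τ) ^ 2
          + 2 * ∑ u, (c u - b u) * (y u - Xmat.mulVec c u)
          + ∑ τ : Fin T → S × A, P θ τ * (∑ u, (c u - b u) * D u τ) ^ 2 := by
    intro b c
    have hgs : ∀ τ, g b τ = g c τ + ∑ u, (c u - b u) * D u τ := by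
      intro τ
      rw [hg, hg, ← Finset.sum_add_distrib]
      exact Finset.sum_congr rfl fun u _ => by ring
    have hpt : ∀ τ, P θ τ * (g b τ) ^ 2
        = P θ τ * (g c τ) ^ 2 + 2 * (P θ τ * (g c τ * (∑ u, (c u - b u) * D u τ)))
          + P θ τ * (∑ u, (c u - b u) * D u τ) ^ 2 := by
      intro τ
      rw [hgs τ]
      ring
    rw [Finset.sum_congr rfl fun τ _ => hpt τ, Finset.sum_add_distrib, Finset.sum_add_distrib]
    congr 2
    rw [← Finset.mul_sum]
    congr 1
    have hpt2 : ∀ τ, P θ τ * (g c τ * ∑ u, (c u - b u) * D u τ)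
        = ∑ u, (c u - b u) * (P θ τ * (g c τ * D u τ)) := by
      intro τ
      rw [Finset.mul_sum, Finset.mul_sum]
      exact Finset.sum_congr rfl fun u _ => by ring
    rw [Finset.sum_congr rfl fun τ _ => hpt2 τ, Finset.sum_comm]
    exact Finset.sum_congr rfl fun u _ => by rw [← Finset.mul_sum, cross c u]
  -- Part 2
  have part2 : ∀ bopt : Fin T → ℝ,
      (∀ b : Fin T → ℝ,
        ∑ τ : Fin T → S × A, P θ τ * (g bopt τ) ^ 2
          ≤ ∑ τ : Fin T → S × A, P θ τ * (g b τ) ^ 2)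
        ↔ Xmat.mulVec bopt = y := by
    intro bopt
    constructor
    · intro hmin
      funext τ'
      have hc : 0 ≤ Xmat τ' τ' := by
        rw [hX]
        exact Finset.sum_nonneg fun τ _ => mul_nonneg (Ppos τ).le (mul_self_nonneg _)
      have key : ∀ ε : ℝ,
          0 ≤ 2 * (-ε * (y τ' - Xmat.mulVec bopt τ')) + ε ^ 2 * Xmat τ' τ' := by
        intro ε
        set b := Function.update bopt τ' (bopt τ' + ε) with hb
        have hcoef : ∀ u : Fin T, bopt u - b u = if u = τ' then -ε else 0 := by
          intro u
          rcases eq_or_ne u τ' with h | h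
          · subst h; simp [hb]
          · simp [hb, Function.update_of_ne h, h]
        have hsum1 : ∑ u, (bopt u - b u) * (y u - Xmat.mulVec bopt u)
            = -ε * (y τ' - Xmat.mulVec bopt τ') := by
          rw [Finset.sum_congr rfl fun u _ => by rw [hcoef u]]
          simp only [ite_mul, zero_mul]
          rw [Finset.sum_ite_eq' Finset.univ τ'
            (fun u => -ε * (y u - Xmat.mulVec bopt u))]
          simp
        have hsq : ∀ τ, (∑ u, (bopt u - b u) * D u τ) = -ε * D τ' τ := by
          intro τ
          rw [Finset.sum_congr rfl fun u _ => by rw [hcoef u]]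
          simp only [ite_mul, zero_mul]
          rw [Finset.sum_ite_eq' Finset.univ τ' (fun u => -ε * D u τ)]
          simp
        have hS2 : ∑ τ : Fin T → S × A, P θ τ * (∑ u, (bopt u - b u) * D u τ) ^ 2
            = ε ^ 2 * Xmat τ' τ' := by
          rw [Finset.sum_congr rfl fun τ _ => by rw [hsq τ], hX, Finset.mul_sum]
          exact Finset.sum_congr rfl fun τ _ => by ring
        have hexp := expand b bopt
        rw [hsum1, hS2] at hexp
        have hge := hmin b
        linarith
      have hr : y τ' - Xmat.mulVec bopt τ' = 0 := by
        set r := y τ' - Xmat.mulVec bopt τ' with hrdef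
        set c := Xmat τ' τ' with hcdef
        by_contra hr0
        have h := key (r / (c + 1))
        have hc1 : (0:ℝ) < c + 1 := by linarith
        rw [div_pow] at h
        have h2 : 0 ≤ (2 * (-(r / (c + 1)) * r) + r ^ 2 / (c + 1) ^ 2 * c) * (c + 1) ^ 2 :=
          mul_nonneg h (by positivity)
        have h3 : (2 * (-(r / (c + 1)) * r) + r ^ 2 / (c + 1) ^ 2 * c) * (c + 1) ^ 2
            = -2 * r ^ 2 * (c + 1) + r ^ 2 * c := by
          field_simp
        rw [h3] at h2
        nlinarith [sq_nonneg r, sq_pos_of_ne_zero hr0]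
      linarith [hr]
    · intro hsol b
      have hexp := expand b bopt
      have h0 : ∑ u, (bopt u - b u) * (y u - Xmat.mulVec bopt u) = 0 :=
        Finset.sum_eq_zero fun u _ => by rw [hsol]; ring
      rw [hexp, h0, mul_zero, add_zero]
      have hnn : 0 ≤ ∑ τ : Fin T → S × A, P θ τ * (∑ u, (bopt u - b u) * D u τ) ^ 2 :=
        Finset.sum_nonneg fun τ _ => mul_nonneg (Ppos τ).le (sq_nonneg _)
      linarith
  refine ⟨fun b c => (part1 b).trans (part1 c).symm, part2, fun hU bopt => ?_⟩
  rw [part2 bopt]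
  have hdet : IsUnit Xmat.det := (Matrix.isUnit_iff_isUnit_det Xmat).mp hU
  constructor
  · intro h
    rw [← h, Matrix.mulVec_mulVec, Matrix.nonsing_inv_mul _ hdet, Matrix.one_mulVec]
  · intro h
    rw [h, Matrix.mulVec_mulVec, Matrix.mul_nonsing_inv _ hdet, Matrix.one_mulVec]
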